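/- Let p ≠ 0. The function H(x,y) = (x - y)^p (x + y)^{-p} (1 + p y²) is a first integral of the system ẋ = x - x²y + pxy² + y³, ẏ = y + py³ on any open region where x - y > 0 and x + y > 0: namely H_x·(x - x²y + pxy² + y³) + H_y·(y + py³) = 0 there. -/

import Mathlib

theorem first_integral_H (p : ℝ) (hp : p ≠ 0) (x y : ℝ)
    (h1 : x - y > 0) (h2 : x + y > 0) :
    deriv (fun x' : ℝ => (x' - y) ^ p * (x' + y) ^ (-p) * (1 + p * y ^ 2)) x *
        (x - x ^ 2 * y + p * x * y ^ 2 + y ^ 3) +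
      deriv (fun y' : ℝ => (x - y') ^ p * (x + y') ^ (-p) * (1 + p * y' ^ 2)) y *
        (y + p * y ^ 3) = 0 := by
  have hxy : x - y ≠ 0 := ne_of_gt h1
  have hxy' : x + y ≠ 0 := ne_of_gt h2
  -- derivative in x'
  have f1 : HasDerivAt (fun x' : ℝ => (x' - y) ^ p) (p * (x - y) ^ (p - 1) * 1) x := by
    have h := (Real.hasDerivAt_rpow_const (x := x - y) (p := p) (Or.inl hxy))
    exact h.comp x ((hasDerivAt_id x).sub_const y)
  have f2 : HasDerivAt (fun x' : ℝ => (x' + y) ^ (-p)) (-p * (x + y) ^ (-p - 1) * 1) x := by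
    have h := (Real.hasDerivAt_rpow_const (x := x + y) (p := -p) (Or.inl hxy'))
    exact h.comp x ((hasDerivAt_id x).add_const y)
  have Fx : HasDerivAt (fun x' : ℝ => (x' - y) ^ p * (x' + y) ^ (-p) * (1 + p * y ^ 2))
      ((p * (x - y) ^ (p - 1) * 1 * (x + y) ^ (-p) +
        (x - y) ^ p * (-p * (x + y) ^ (-p - 1) * 1)) * (1 + p * y ^ 2)) x :=
    (f1.mul f2).mul_const _
  -- derivative in y'
  have g1 : HasDerivAt (fun y' : ℝ => (x - y') ^ p) (p * (x - y) ^ (p - 1) * (-1)) y := by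
    have h := (Real.hasDerivAt_rpow_const (x := x - y) (p := p) (Or.inl hxy))
    simpa [Function.comp_def] using h.comp y ((hasDerivAt_const y x).sub (hasDerivAt_id y))
  have g2 : HasDerivAt (fun y' : ℝ => (x + y') ^ (-p)) (-p * (x + y) ^ (-p - 1) * 1) y := by
    have h := (Real.hasDerivAt_rpow_const (x := x + y) (p := -p) (Or.inl hxy'))
    simpa [Function.comp_def] using h.comp y ((hasDerivAt_const y x).add (hasDerivAt_id y))
  have g3 : HasDerivAt (fun y' : ℝ => 1 + p * y' ^ 2) (p * (2 * y)) y := by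
    have : HasDerivAt (fun y' : ℝ => y' ^ 2) (2 * y) y := by
      simpa using (hasDerivAt_pow 2 y)
    simpa using ((this.const_mul p).const_add 1)
  have Fy : HasDerivAt (fun y' : ℝ => (x - y') ^ p * (x + y') ^ (-p) * (1 + p * y' ^ 2))
      ((p * (x - y) ^ (p - 1) * (-1) * (x + y) ^ (-p) +
        (x - y) ^ p * (-p * (x + y) ^ (-p - 1) * 1)) * (1 + p * y ^ 2) +
        (x - y) ^ p * (x + y) ^ (-p) * (p * (2 * y))) y :=
    (g1.mul g2).mul g3
  rw [Fx.deriv, Fy.deriv]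
  have e1 : (x - y) ^ (p - 1) = (x - y) ^ p / (x - y) := by
    rw [Real.rpow_sub h1, Real.rpow_one]
  have e2 : (x + y) ^ (-p - 1) = (x + y) ^ (-p) / (x + y) := by
    rw [Real.rpow_sub h2, Real.rpow_one]
  rw [e1, e2]
  field_simp
  ring
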